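/- (Treated-arm identity for the DR estimator.) Under no unmeasured confounding and the stated overlap conditions, the augmented IPW functional for the treated arm with misspecified propensity score and misspecified outcome regression satisfies E[(T·Y − (T − e*(X))·μ1*(X)) / e*(X)] − μ1 = E[((e(X) − e*(X))/e*(X)) · (μ1(X) − μ1*(X))]. -/

import Mathlib

open MeasureTheory ProbabilityTheory Set

section Aux

variable {Ω : Type*} {m : MeasurableSpace Ω} {mΩ : MeasurableSpace Ω} [StandardBorelSpace Ω]
  {μ : Measure Ω} [IsFiniteMeasure μ]

lemma condexpKernel_null_ae (hm : m ≤ mΩ) (μ : Measure Ω) [IsFiniteMeasure μ]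
    {N : Set Ω} (hN : MeasurableSet N) (hNμ : μ N = 0) :
    ∀ᵐ ω ∂(μ.trim hm), condExpKernel μ m ω N = 0 := by
  have h1 := condExpKernel_ae_eq_trim_condExp (μ := μ) hm hN
  have h0 : (N.indicator (fun _ => (1:ℝ))) =ᵐ[μ] 0 := by
    filter_upwards [measure_eq_zero_iff_ae_notMem.mp hNμ] with ω hω
    simp [Set.indicator_of_notMem hω]
  have h2 : μ⟦N | m⟧ =ᵐ[μ] 0 := (condExp_congr_ae h0).trans (by rw [condExp_zero])
  have h2' : μ⟦N | m⟧ =ᵐ[μ.trim hm] 0 :=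
    (StronglyMeasurable.ae_eq_trim_iff hm stronglyMeasurable_condExp stronglyMeasurable_const).mpr h2
  filter_upwards [h1, h2'] with ω hω1 hω2
  have h3 : (condExpKernel μ m ω N).toReal = 0 := by
    rw [← measureReal_def, hω1, hω2]; rfl
  rcases ENNReal.toReal_eq_zero_iff _ |>.mp h3 with h | h
  · exact h
  · exact absurd h (measure_ne_top _ _)

lemma ae_ae_eq_condexpKernel (hm : m ≤ mΩ) {f f' : Ω → ℝ} (h : f =ᵐ[μ] f') :
    ∀ᵐ ω ∂(μ.trim hm), f =ᵐ[condExpKernel μ m ω] f' := by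
  have hs : μ (toMeasurable μ {x | f x ≠ f' x}) = 0 := by
    rw [measure_toMeasurable]; exact h
  filter_upwards [condexpKernel_null_ae hm μ (measurableSet_toMeasurable _ _) hs] with ω hω
  exact ae_iff.mpr (measure_mono_null (subset_toMeasurable _ _) hω)

lemma condIndepFun_congr_ae (hm : m ≤ mΩ) {f g f' g' : Ω → ℝ}
    (h : CondIndepFun m hm f g μ) (hf : f =ᵐ[μ] f') (hg : g =ᵐ[μ] g') :
    CondIndepFun m hm f' g' μ :=
  Kernel.IndepFun.congr' h (ae_ae_eq_condexpKernel hm hf) (ae_ae_eq_condexpKernel hm hg)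

lemma ae_indepFun_of_condIndepFun (hm : m ≤ mΩ) {f g : Ω → ℝ}
    (hf : Measurable f) (hg : Measurable g) (h : CondIndepFun m hm f g μ) :
    ∀ᵐ ω ∂μ, IndepFun f g (condExpKernel μ m ω) := by
  have h' : ∀ᵐ ω ∂(μ.trim hm), ∀ (q r : ℚ),
      condExpKernel μ m ω (f ⁻¹' Iic (q:ℝ) ∩ g ⁻¹' Iic (r:ℝ))
        = condExpKernel μ m ω (f ⁻¹' Iic (q:ℝ)) * condExpKernel μ m ω (g ⁻¹' Iic (r:ℝ)) := by
    rw [ae_all_iff]; intro q; rw [ae_all_iff]; intro r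
    exact h _ _ ⟨_, measurableSet_Iic, rfl⟩ ⟨_, measurableSet_Iic, rfl⟩
  refine ae_of_ae_trim hm ?_
  filter_upwards [h'] with ω hω
  have hS : IsPiSystem (⋃ a : ℚ, {Iic (a : ℝ)}) := Real.isPiSystem_Iic_rat
  have hgen : (inferInstance : MeasurableSpace ℝ) = .generateFrom (⋃ a : ℚ, {Iic (a : ℝ)}) := by
    rw [← Real.borel_eq_generateFrom_Iic_rat]; exact BorelSpace.measurable_eq
  have hpi : ∀ (φ : Ω → ℝ), IsPiSystem ((fun s => φ ⁻¹' s) '' (⋃ a : ℚ, {Iic (a : ℝ)})) :=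
    fun φ => hS.comap φ
  have hcomap : ∀ (φ : Ω → ℝ), MeasurableSpace.comap φ (inferInstance : MeasurableSpace ℝ)
      = .generateFrom ((fun s => φ ⁻¹' s) '' (⋃ a : ℚ, {Iic (a : ℝ)})) := by
    intro φ; rw [hgen, MeasurableSpace.comap_generateFrom]
  have hsets : IndepSets ((fun s => f ⁻¹' s) '' (⋃ a : ℚ, {Iic (a : ℝ)}))
      ((fun s => g ⁻¹' s) '' (⋃ a : ℚ, {Iic (a : ℝ)})) (condExpKernel μ m ω) := by
    rintro _ _ ⟨s, hs, rfl⟩ ⟨t, ht, rfl⟩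
    simp only [Set.mem_iUnion, Set.mem_singleton_iff] at hs ht
    obtain ⟨q, rfl⟩ := hs; obtain ⟨r, rfl⟩ := ht
    exact Filter.Eventually.of_forall fun _ => hω q r
  have : Indep (MeasurableSpace.comap f inferInstance) (MeasurableSpace.comap g inferInstance)
      (condExpKernel μ m ω) :=
    IndepSets.indep hf.comap_le hg.comap_le (hpi f) (hpi g) (hcomap f) (hcomap g) hsets
  exact this

lemma condexp_mul_of_condIndepFun' (hm : m ≤ mΩ) {f g : Ω → ℝ}
    (hf : Measurable f) (hg : Measurable g)
    (hf_int : Integrable f μ) (hg_int : Integrable g μ)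
    (hfg_int : Integrable (fun ω => f ω * g ω) μ)
    (h : CondIndepFun m hm f g μ) :
    μ[fun ω => f ω * g ω | m] =ᵐ[μ] fun ω => (μ[f|m]) ω * (μ[g|m]) ω := by
  filter_upwards [condExp_ae_eq_integral_condExpKernel hm hfg_int,
    condExp_ae_eq_integral_condExpKernel hm hf_int,
    condExp_ae_eq_integral_condExpKernel hm hg_int,
    ae_indepFun_of_condIndepFun hm hf hg h] with ω h1 h2 h3 h4
  rw [h1, h2, h3, ← h4.integral_mul_eq_mul_integral hf.aestronglyMeasurable hg.aestronglyMeasurable]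
  rfl

end Aux

/-- Treated-arm identity for the DR estimator:
`E[(T·Y − (T − e*(X))·μ1*(X)) / e*(X)] − μ1
  = E[((e(X) − e*(X))/e*(X)) · (μ1(X) − μ1*(X))]`. -/
theorem dr_treated_identity
    {Ω : Type*} [MeasurableSpace Ω] [StandardBorelSpace Ω]
    {𝓧 : Type*} [MeasurableSpace 𝓧]
    (μ : Measure Ω) [IsProbabilityMeasure μ]
    (X : Ω → 𝓧) (hX : Measurable X)
    (T Y0 Y1 : Ω → ℝ)
    (hT01 : ∀ ω, T ω = 0 ∨ T ω = 1)
    (hY0int : Integrable Y0 μ) (hY1int : Integrable Y1 μ)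
    (Y : Ω → ℝ) (hY : Y = fun ω => T ω * Y1 ω + (1 - T ω) * Y0 ω)
    -- no unmeasured confounding: Y(t) ⟂ T | σ(X), t = 0, 1
    (hNUC0 : CondIndepFun (MeasurableSpace.comap X inferInstance) hX.comap_le Y0 T μ)
    (hNUC1 : CondIndepFun (MeasurableSpace.comap X inferInstance) hX.comap_le Y1 T μ)
    -- e(X): a version of P(T = 1 | σ(X)) = E[T | σ(X)]
    (eX : Ω → ℝ) (heX : eX =ᵐ[μ] μ[T | MeasurableSpace.comap X inferInstance])
    -- μ1(X): a version of E[Y(1) | σ(X)]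
    (μ1X : Ω → ℝ) (hμ1X : μ1X =ᵐ[μ] μ[Y1 | MeasurableSpace.comap X inferInstance])
    -- overlap for the true propensity score
    (η : ℝ) (hη : 0 < η)
    (hover : ∀ᵐ ω ∂μ, η < eX ω ∧ eX ω < 1 - η)
    -- misspecified propensity score e*(X) = g(X) and overlap under misspecification
    (g : 𝓧 → ℝ) (hg : Measurable g)
    (ν : ℝ) (hν : 0 < ν)
    (hover' : ∀ᵐ ω ∂μ, ν < g (X ω) ∧ g (X ω) < 1 - ν)
    -- misspecified outcome regression limit μ1*(X) = h1(X)
    (h1 : 𝓧 → ℝ) (hh1 : Measurable h1)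
    -- integrability of the displayed functionals
    (hint1 : Integrable
      (fun ω => (T ω * Y ω - (T ω - g (X ω)) * h1 (X ω)) / g (X ω)) μ)
    (hint2 : Integrable
      (fun ω => ((eX ω - g (X ω)) / g (X ω)) * (μ1X ω - h1 (X ω))) μ) :
    (∫ ω, (T ω * Y ω - (T ω - g (X ω)) * h1 (X ω)) / g (X ω) ∂μ) - (∫ ω, Y1 ω ∂μ)
      = ∫ ω, ((eX ω - g (X ω)) / g (X ω)) * (μ1X ω - h1 (X ω)) ∂μ := by
  classical
  have hm : MeasurableSpace.comap X inferInstance ≤ _ := hX.comap_le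
  haveI : SigmaFinite (μ.trim hm) := by
    have : IsFiniteMeasure (μ.trim hm) := isFiniteMeasure_trim hm
    infer_instance
  -- basic facts about T
  have hT01' : ∀ ω, 0 ≤ T ω ∧ T ω ≤ 1 := by
    intro ω; rcases hT01 ω with h | h <;> rw [h] <;> norm_num
  have hTabs : ∀ ω, |T ω| ≤ 1 := fun ω => abs_le.mpr ⟨by linarith [(hT01' ω).1], (hT01' ω).2⟩
  have hTY : ∀ ω, T ω * Y ω = T ω * Y1 ω := by
    intro ω; rcases hT01 ω with h | h <;> simp [hY, h]
  -- integrability of T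
  have hTint : Integrable T μ := by
    by_contra hTi
    have h0 : μ[T|(MeasurableSpace.comap X inferInstance)] = 0 := condExp_of_not_integrable hTi
    have hFalse : ∀ᵐ ω ∂μ, False := by
      filter_upwards [heX, hover] with ω hω1 hω2
      rw [h0] at hω1
      simp only [Pi.zero_apply] at hω1
      rw [hω1] at hω2
      linarith [hω2.1]
    rw [ae_iff] at hFalse
    simp [measure_univ] at hFalse
  have hTaesm : AEStronglyMeasurable T μ := hTint.1
  obtain ⟨T', hT'sm, hTT'⟩ : ∃ T', StronglyMeasurable T' ∧ T =ᵐ[μ] T' :=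
    ⟨hTaesm.mk T, hTaesm.stronglyMeasurable_mk, hTaesm.ae_eq_mk⟩
  obtain ⟨Y1', hY1'sm, hY1Y1'⟩ : ∃ Y1', StronglyMeasurable Y1' ∧ Y1 =ᵐ[μ] Y1' :=
    ⟨hY1int.1.mk Y1, hY1int.1.stronglyMeasurable_mk, hY1int.1.ae_eq_mk⟩
  -- measurability facts
  have hXm : Measurable[(MeasurableSpace.comap X inferInstance)] X := fun s hs => ⟨s, hs, rfl⟩
  have hGm : Measurable[(MeasurableSpace.comap X inferInstance)] fun ω => g (X ω) := hg.comp hXm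
  have hHm : Measurable[(MeasurableSpace.comap X inferInstance)] fun ω => h1 (X ω) := hh1.comp hXm
  have hG : Measurable fun ω => g (X ω) := hg.comp hX
  have hH : Measurable fun ω => h1 (X ω) := hh1.comp hX
  have hνinv : (0:ℝ) < ν⁻¹ := inv_pos.mpr hν
  -- Integrable (T * Y1)
  have hTY1int : Integrable (fun ω => T ω * Y1 ω) μ := by
    refine Integrable.mono' hY1int.abs (hTaesm.mul hY1int.1) ?_
    refine Filter.Eventually.of_forall fun ω => ?_
    rw [Real.norm_eq_abs, abs_mul]
    exact mul_le_of_le_one_left (abs_nonneg _) (hTabs ω)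
  -- Integrable (h1 ∘ X)
  have hFG : Integrable (fun ω =>
      (T ω * Y ω - (T ω - g (X ω)) * h1 (X ω)) / g (X ω) * g (X ω)) μ := by
    refine Integrable.mono' hint1.abs (hint1.1.mul hG.aestronglyMeasurable) ?_
    filter_upwards [hover'] with ω hω
    rw [Real.norm_eq_abs, abs_mul]
    have h1ω : |g (X ω)| ≤ 1 := abs_le.mpr ⟨by linarith [hω.1], by linarith [hω.2]⟩
    exact mul_le_of_le_one_right (abs_nonneg _) h1ω
  have hFGeq : (fun ω => (T ω * Y ω - (T ω - g (X ω)) * h1 (X ω)) / g (X ω) * g (X ω)) =ᵐ[μ]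
      fun ω => T ω * Y1 ω - (T ω - g (X ω)) * h1 (X ω) := by
    filter_upwards [hover'] with ω hω
    have hg0 : g (X ω) ≠ 0 := by linarith [hω.1]
    rw [div_mul_cancel₀ _ hg0, hTY ω]
  have hTGH : Integrable (fun ω => (T ω - g (X ω)) * h1 (X ω)) μ := by
    have h : Integrable (fun ω =>
        T ω * Y1 ω - (T ω * Y1 ω - (T ω - g (X ω)) * h1 (X ω))) μ :=
      hTY1int.sub (hFG.congr hFGeq)
    exact h.congr (Filter.Eventually.of_forall fun ω => by ring)
  have hHint : Integrable (fun ω => h1 (X ω)) μ := by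
    refine Integrable.mono' (hTGH.abs.const_mul ν⁻¹) hH.aestronglyMeasurable ?_
    filter_upwards [hover'] with ω hω
    have hlow : ν ≤ |T ω - g (X ω)| := by
      rcases hT01 ω with h | h <;> rw [h]
      · rw [zero_sub, abs_neg, abs_of_pos (by linarith [hω.1])]; linarith [hω.1]
      · rw [abs_of_pos (by linarith [hω.2])]; linarith [hω.2]
    rw [Real.norm_eq_abs]
    calc |h1 (X ω)| = ν⁻¹ * (ν * |h1 (X ω)|) := by field_simp
      _ ≤ ν⁻¹ * (|T ω - g (X ω)| * |h1 (X ω)|) := by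
          exact mul_le_mul_of_nonneg_left
            (mul_le_mul_of_nonneg_right hlow (abs_nonneg _)) hνinv.le
      _ = ν⁻¹ * |(T ω - g (X ω)) * h1 (X ω)| := by rw [abs_mul]
  -- generic integrability of u / g(X)
  have hbound : ∀ (u : Ω → ℝ), Integrable u μ →
      Integrable (fun ω => u ω / g (X ω)) μ := by
    intro u hu
    have hmeas : AEStronglyMeasurable (fun ω => u ω / g (X ω)) μ :=
      (hu.1.mul hG.inv.aestronglyMeasurable).congr
        (Filter.Eventually.of_forall fun ω => (div_eq_mul_inv _ _).symm)
    refine Integrable.mono' (hu.abs.const_mul ν⁻¹) hmeas ?_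
    filter_upwards [hover'] with ω hω
    have hgpos : (0:ℝ) < g (X ω) := by linarith [hν, hω.1]
    rw [Real.norm_eq_abs, abs_div, abs_of_pos hgpos, div_eq_mul_inv, mul_comm]
    refine mul_le_mul_of_nonneg_right ?_ (abs_nonneg _)
    rw [inv_le_inv₀ hgpos hν]
    exact hω.1.le
  -- more integrable pieces
  have hTHint : Integrable (fun ω => T ω * h1 (X ω)) μ := by
    refine Integrable.mono' hHint.abs (hTaesm.mul hH.aestronglyMeasurable) ?_
    refine Filter.Eventually.of_forall fun ω => ?_
    rw [Real.norm_eq_abs, abs_mul]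
    exact mul_le_of_le_one_left (abs_nonneg _) (hTabs ω)
  have hμ1Xint : Integrable μ1X μ := integrable_condExp.congr hμ1X.symm
  have heXaesm : AEStronglyMeasurable eX μ :=
    (stronglyMeasurable_condExp.mono hm).aestronglyMeasurable.congr heX.symm
  have heXabs : ∀ᵐ ω ∂μ, |eX ω| ≤ 1 := by
    filter_upwards [hover] with ω hω
    exact abs_le.mpr ⟨by linarith [hω.1], by linarith [hω.2]⟩
  have heμ1int : Integrable (fun ω => eX ω * μ1X ω) μ := by
    refine Integrable.mono' hμ1Xint.abs (heXaesm.mul hμ1Xint.1) ?_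
    filter_upwards [heXabs] with ω hω
    rw [Real.norm_eq_abs, abs_mul]
    exact mul_le_of_le_one_left (abs_nonneg _) hω
  have heHint : Integrable (fun ω => eX ω * h1 (X ω)) μ := by
    refine Integrable.mono' hHint.abs (heXaesm.mul hH.aestronglyMeasurable) ?_
    filter_upwards [heXabs] with ω hω
    rw [Real.norm_eq_abs, abs_mul]
    exact mul_le_of_le_one_left (abs_nonneg _) hω
  have I1 : Integrable (fun ω => T ω * Y1 ω / g (X ω)) μ := hbound _ hTY1int
  have I2 : Integrable (fun ω => T ω * h1 (X ω) / g (X ω)) μ := hbound _ hTHint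
  have IA' : Integrable (fun ω => eX ω * μ1X ω / g (X ω)) μ := hbound _ heμ1int
  have IB' : Integrable (fun ω => eX ω * h1 (X ω) / g (X ω)) μ := hbound _ heHint
  -- the pull-out key
  have key : ∀ (F : Ω → ℝ), Integrable (fun ω => F ω / g (X ω)) μ → Integrable F μ →
      ∫ ω, F ω / g (X ω) ∂μ = ∫ ω, (μ[F|(MeasurableSpace.comap X inferInstance)]) ω / g (X ω) ∂μ := by
    intro F hd hF
    have hw : StronglyMeasurable[(MeasurableSpace.comap X inferInstance)] fun ω => (g (X ω))⁻¹ :=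
      hGm.inv.stronglyMeasurable
    have hd' : Integrable ((fun ω => (g (X ω))⁻¹) * F) μ :=
      hd.congr (Filter.Eventually.of_forall fun ω => by
        simp [div_eq_inv_mul, Pi.mul_apply])
    have h3 := condExp_mul_of_stronglyMeasurable_left (μ := μ) hw hd' hF
    calc ∫ ω, F ω / g (X ω) ∂μ
        = ∫ ω, ((fun ω => (g (X ω))⁻¹) * F) ω ∂μ := by
          refine integral_congr_ae (Filter.Eventually.of_forall fun ω => ?_)
          simp [div_eq_inv_mul, Pi.mul_apply]
      _ = ∫ ω, (μ[(fun ω => (g (X ω))⁻¹) * F|(MeasurableSpace.comap X inferInstance)]) ω ∂μ := (integral_condExp hm).symm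
      _ = ∫ ω, ((fun ω => (g (X ω))⁻¹) * μ[F|(MeasurableSpace.comap X inferInstance)]) ω ∂μ := integral_congr_ae h3
      _ = ∫ ω, (μ[F|(MeasurableSpace.comap X inferInstance)]) ω / g (X ω) ∂μ := by
          refine integral_congr_ae (Filter.Eventually.of_forall fun ω => ?_)
          simp [div_eq_inv_mul, Pi.mul_apply]
  -- conditional independence: E[T'Y1'|m] = E[T'|m]E[Y1'|m] = eX * μ1X
  have hNUC1' : CondIndepFun (MeasurableSpace.comap X inferInstance) hm T' Y1' μ :=
    condIndepFun_congr_ae hm hNUC1.symm hTT' hY1Y1'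
  have hprod : μ[fun ω => T' ω * Y1' ω|(MeasurableSpace.comap X inferInstance)] =ᵐ[μ]
      fun ω => (μ[T'|(MeasurableSpace.comap X inferInstance)]) ω * (μ[Y1'|(MeasurableSpace.comap X inferInstance)]) ω :=
    condexp_mul_of_condIndepFun' hm hT'sm.measurable hY1'sm.measurable
      (hTint.congr hTT') (hY1int.congr hY1Y1') (hTY1int.congr (hTT'.mul hY1Y1')) hNUC1'
  have heX' : μ[T'|(MeasurableSpace.comap X inferInstance)] =ᵐ[μ] eX := (condExp_congr_ae hTT'.symm).trans heX.symm
  have hμ1X' : μ[Y1'|(MeasurableSpace.comap X inferInstance)] =ᵐ[μ] μ1X := (condExp_congr_ae hY1Y1'.symm).trans hμ1X.symm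
  have hprod2 : μ[fun ω => T' ω * Y1' ω|(MeasurableSpace.comap X inferInstance)] =ᵐ[μ] fun ω => eX ω * μ1X ω := by
    refine hprod.trans ?_
    filter_upwards [heX', hμ1X'] with ω ha hb
    rw [ha, hb]
  -- the three key integral identities
  have k1 : ∫ ω, T ω * Y1 ω / g (X ω) ∂μ = ∫ ω, eX ω * μ1X ω / g (X ω) ∂μ := by
    have e1 : (fun ω => T ω * Y1 ω / g (X ω)) =ᵐ[μ] fun ω => T' ω * Y1' ω / g (X ω) := by
      filter_upwards [hTT', hY1Y1'] with ω ha hb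
      rw [ha, hb]
    rw [integral_congr_ae e1,
      key _ (I1.congr e1) (hTY1int.congr (hTT'.mul hY1Y1'))]
    refine integral_congr_ae ?_
    filter_upwards [hprod2] with ω hω
    rw [hω]
  have k2 : ∫ ω, T ω * h1 (X ω) / g (X ω) ∂μ = ∫ ω, eX ω * h1 (X ω) / g (X ω) ∂μ := by
    rw [key _ I2 hTHint]
    have hTH : μ[fun ω => T ω * h1 (X ω)|(MeasurableSpace.comap X inferInstance)] =ᵐ[μ]
        fun ω => h1 (X ω) * (μ[T|(MeasurableSpace.comap X inferInstance)]) ω := by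
      have hd' : Integrable ((fun ω => h1 (X ω)) * T) μ :=
        hTHint.congr (Filter.Eventually.of_forall fun ω => by
          simp [Pi.mul_apply, mul_comm])
      have h3 := condExp_mul_of_stronglyMeasurable_left (μ := μ) hHm.stronglyMeasurable hd' hTint
      have h4 : μ[fun ω => T ω * h1 (X ω)|(MeasurableSpace.comap X inferInstance)] =ᵐ[μ] μ[(fun ω => h1 (X ω)) * T|(MeasurableSpace.comap X inferInstance)] :=
        condExp_congr_ae (Filter.Eventually.of_forall fun ω => by
          simp [Pi.mul_apply, mul_comm])
      exact h4.trans h3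
    refine integral_congr_ae ?_
    filter_upwards [hTH, heX] with ω ha hb
    rw [ha, ← hb]
    ring
  have k3 : ∫ ω, Y1 ω ∂μ = ∫ ω, μ1X ω ∂μ := by
    rw [← integral_condExp hm (f := Y1)]
    exact (integral_congr_ae hμ1X).symm
  -- split the two sides
  have hsplitL : (fun ω => (T ω * Y ω - (T ω - g (X ω)) * h1 (X ω)) / g (X ω)) =ᵐ[μ]
      fun ω => T ω * Y1 ω / g (X ω) - T ω * h1 (X ω) / g (X ω) + h1 (X ω) := by
    filter_upwards [hover'] with ω hω
    have hg0 : g (X ω) ≠ 0 := by linarith [hω.1]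
    rw [hTY ω]
    field_simp
    ring
  have hsplitR : (fun ω => ((eX ω - g (X ω)) / g (X ω)) * (μ1X ω - h1 (X ω))) =ᵐ[μ]
      fun ω => eX ω * μ1X ω / g (X ω) - eX ω * h1 (X ω) / g (X ω) - μ1X ω + h1 (X ω) := by
    filter_upwards [hover'] with ω hω
    have hg0 : g (X ω) ≠ 0 := by linarith [hω.1]
    field_simp
    ring
  have I12 : Integrable (fun ω => T ω * Y1 ω / g (X ω) - T ω * h1 (X ω) / g (X ω)) μ :=
    I1.sub I2
  have IAB : Integrable (fun ω => eX ω * μ1X ω / g (X ω) - eX ω * h1 (X ω) / g (X ω)) μ :=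
    IA'.sub IB'
  have IABμ : Integrable
      (fun ω => eX ω * μ1X ω / g (X ω) - eX ω * h1 (X ω) / g (X ω) - μ1X ω) μ :=
    IAB.sub hμ1Xint
  have hLHS : ∫ ω, (T ω * Y ω - (T ω - g (X ω)) * h1 (X ω)) / g (X ω) ∂μ
      = ∫ ω, T ω * Y1 ω / g (X ω) ∂μ - ∫ ω, T ω * h1 (X ω) / g (X ω) ∂μ
        + ∫ ω, h1 (X ω) ∂μ := by
    rw [integral_congr_ae hsplitL, integral_add I12 hHint, integral_sub I1 I2]
  have hRHS : ∫ ω, ((eX ω - g (X ω)) / g (X ω)) * (μ1X ω - h1 (X ω)) ∂μ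
      = ∫ ω, eX ω * μ1X ω / g (X ω) ∂μ - ∫ ω, eX ω * h1 (X ω) / g (X ω) ∂μ
        - ∫ ω, μ1X ω ∂μ + ∫ ω, h1 (X ω) ∂μ := by
    rw [integral_congr_ae hsplitR, integral_add IABμ hHint,
      integral_sub IAB hμ1Xint, integral_sub IA' IB']
  rw [hLHS, hRHS, k1, k2, k3]
  ring
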